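/- Let d be a standard n-distance on X, g : X² → ℝ≥0, and z ∈ X with d(x,z,…,z) ≤ g(x,z) for all x ∈ X. Then for every k ∈ {1,…,n}, d(x₁,…,x_k,z,…,z) ≤ ∑_{i=1}^k g(xᵢ,z) for all x₁,…,x_k ∈ X; in particular d(x₁,…,xₙ) ≤ ∑_{i=1}^n g(xᵢ,z). -/

import Mathlib

open Finset Function

/-- `d` is an `n`-distance: nonnegative, vanishing exactly on constant tuples,
symmetric, and satisfying the simplex inequality. -/
structure IsNDistance {X : Type*} {n : ℕ} (d : (Fin n → X) → ℝ) : Prop where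
  nonneg : ∀ x, 0 ≤ d x
  eq_zero_iff : ∀ x, d x = 0 ↔ ∀ i j : Fin n, x i = x j
  symm : ∀ (x : Fin n → X) (σ : Equiv.Perm (Fin n)), d (x ∘ σ) = d x
  simplex : ∀ (x : Fin n → X) (z : X), d x ≤ ∑ i, d (Function.update x i z)

/-- For a standard $n$-distance dominated on "two-point" tuples by $g$, the distance of
$(x_1,…,x_k,z,…,z)$ is at most $∑_{i=1}^k g(x_i,z)$. -/
theorem standard_dominated_sum {X : Type*} {n : ℕ} (hn : 2 ≤ n)
    (d : (Fin n → X) → ℝ) (hd : IsNDistance d)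
    (hstd : ∀ (x : Fin n → X) (z : X),
      d x ≤ (1 / ((n : ℝ) - 1)) * ∑ i, d (Function.update x i z))
    (g : X → X → ℝ) (z : X)
    (hg : ∀ x : X, d (fun i : Fin n => if (i : ℕ) = 0 then x else z) ≤ g x z) :
    (∀ k, 1 ≤ k → k ≤ n → ∀ x : Fin n → X,
      d (fun i : Fin n => if (i : ℕ) < k then x i else z) ≤
        ∑ i ∈ Finset.univ.filter (fun i : Fin n => (i : ℕ) < k), g (x i) z) ∧
    (∀ x : Fin n → X, d x ≤ ∑ i, g (x i) z) := by
  have hnR : (2:ℝ) ≤ (n:ℝ) := by exact_mod_cast hn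
  have hcard : ∀ m, m ≤ n → (Finset.univ.filter fun i : Fin n => (i:ℕ) < m).card = m := by
    intro m hm
    have heq : (Finset.univ.filter fun i : Fin n => (i:ℕ) < m)
        = Finset.map (Fin.castLEEmb hm) Finset.univ := by
      ext i
      simp only [mem_filter, mem_univ, true_and, Finset.mem_map, Fin.castLEEmb_apply]
      constructor
      · intro h; exact ⟨⟨i, h⟩, rfl⟩
      · rintro ⟨a, rfl⟩; exact a.isLt
    rw [heq, Finset.card_map, Finset.card_univ, Fintype.card_fin]
  have main : ∀ k, 1 ≤ k → k ≤ n → ∀ x : Fin n → X,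
      d (fun i : Fin n => if (i : ℕ) < k then x i else z) ≤
        ∑ i ∈ Finset.univ.filter (fun i : Fin n => (i : ℕ) < k), g (x i) z := by
    intro k
    induction k with
    | zero => omega
    | succ k ih =>
      intro _ hkn x
      rcases Nat.eq_zero_or_pos k with hk0 | hk1
      · subst hk0
        have h0 : (fun i : Fin n => if (i:ℕ) < 1 then x i else z)
            = fun i : Fin n => if (i:ℕ) = 0 then x ⟨0, by omega⟩ else z := by
          funext i
          by_cases h : (i:ℕ) = 0
          · have hi : i = ⟨0, by omega⟩ := Fin.ext h
            simp [hi]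
          · simp [h, Nat.lt_one_iff]
        have hset : (Finset.univ.filter fun i : Fin n => (i:ℕ) < 1)
            = {(⟨0, by omega⟩ : Fin n)} := by
          ext i
          simp [Nat.lt_one_iff, Fin.ext_iff]
        rw [h0, hset, Finset.sum_singleton]
        exact hg _
      · -- inductive step
        set y : Fin n → X := fun i => if (i:ℕ) < k + 1 then x i else z with hy
        have hkltn : k < n := by omega
        set kk : Fin n := ⟨k, hkltn⟩ with hkk
        set A : Finset (Fin n) := Finset.univ.filter (fun i : Fin n => (i:ℕ) < k + 1) with hA
        set S : ℝ := ∑ i ∈ A, g (x i) z with hS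
        have hAcard : A.card = k + 1 := hcard (k+1) hkn
        -- terms with index ≥ k+1 are fixed
        have hfix : ∀ i : Fin n, ¬ (i:ℕ) < k + 1 → Function.update y i z = y := by
          intro i hi
          have hyi : y i = z := by simp [hy, hi]; intro h; exact absurd (by omega : (i:ℕ) < k + 1) hi
          conv_rhs => rw [← Function.update_eq_self i y]
          rw [hyi]
        have hsplit : ∑ i, d (Function.update y i z)
            = ∑ i ∈ A, d (Function.update y i z) + ((n:ℝ) - (k+1)) * d y := by
          rw [← Finset.sum_filter_add_sum_filter_not Finset.univ
            (fun i : Fin n => (i:ℕ) < k+1)]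
          congr 1
          rw [Finset.sum_congr rfl (fun i hi => by
            rw [hfix i (by simpa using (Finset.mem_filter.mp hi).2)])]
          rw [Finset.sum_const, nsmul_eq_mul]
          congr 1
          have hc2 : (Finset.univ.filter fun i : Fin n => ¬ (i:ℕ) < k+1).card = n - (k+1) := by
            have heq2 : (Finset.univ.filter fun i : Fin n => ¬ (i:ℕ) < k+1)
                = Finset.univ \ A := by rw [hA, Finset.filter_not]
            rw [heq2, Finset.card_sdiff_of_subset (Finset.subset_univ A), Finset.card_univ,
              Fintype.card_fin, hAcard]
          rw [hc2]
          push_cast [Nat.cast_sub hkn]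
          ring
        have hmain1 : ((n:ℝ) - 1) * d y ≤ ∑ i, d (Function.update y i z) := by
          have h := hstd y z
          have hpos : (0:ℝ) < (n:ℝ) - 1 := by linarith
          have h2 := mul_le_mul_of_nonneg_left h hpos.le
          rwa [← mul_assoc, mul_one_div_cancel hpos.ne', one_mul] at h2
        have hstep : (k:ℝ) * d y ≤ ∑ i ∈ A, d (Function.update y i z) := by
          rw [hsplit] at hmain1
          have : ((n:ℝ) - 1) * d y - ((n:ℝ) - (k+1)) * d y = (k:ℝ) * d y := by push_cast; ring
          linarith
        -- bound each term
        have hterm : ∀ i ∈ A, d (Function.update y i z) ≤ S - g (x i) z := by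
          intro i hiA
          have hik1 : (i:ℕ) < k + 1 := by
            simpa [hA] using hiA
          set τ : Equiv.Perm (Fin n) := Equiv.swap i kk with hτ
          set x' : Fin n → X := Function.update x i (x kk) with hx'
          have hcomp : (Function.update y i z) ∘ τ
              = fun j : Fin n => if (j:ℕ) < k then x' j else z := by
            funext j
            simp only [Function.comp_apply]
            by_cases hji : j = i
            · subst hji
              rw [hτ, Equiv.swap_apply_left]
              by_cases hik : j = kk
              · have hval : (j:ℕ) = k := by rw [hik]
                rw [← hik, Function.update_self]
                simp [hval]
              · have hval : (j:ℕ) < k := by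
                  have : (j:ℕ) ≠ k := fun h => hik (Fin.ext h)
                  omega
                have hkki : kk ≠ j := fun h => hik h.symm
                rw [Function.update_of_ne hkki]
                simp [hy, hval, hx', Function.update_self, hkk]
            · by_cases hjk : j = kk
              · subst hjk
                rw [hτ, Equiv.swap_apply_right, Function.update_self]
                simp [hkk]
              · rw [hτ, Equiv.swap_apply_of_ne_of_ne hji hjk, Function.update_of_ne hji]
                have hvk : (j:ℕ) ≠ k := fun h => hjk (Fin.ext h)
                by_cases hlt : (j:ℕ) < k
                · simp [hy, hlt, Nat.lt_succ_of_lt hlt, hx', Function.update_of_ne hji]; intro h; exact absurd h (by omega)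
                · have : ¬ (j:ℕ) < k + 1 := by omega
                  simp [hy, hlt, this]; intro h; exact absurd (by omega : (j:ℕ) < k + 1) this
          have hsymm := hd.symm (Function.update y i z) τ
          rw [hcomp] at hsymm
          have hih := ih hk1 (by omega) x'
          -- sum reindex
          have hsum : ∑ j ∈ Finset.univ.filter (fun j : Fin n => (j:ℕ) < k), g (x' j) z
              = ∑ j ∈ A.erase i, g (x j) z := by
            refine Finset.sum_nbij' (fun j => τ j) (fun j => τ j) ?_ ?_ ?_ ?_ ?_
            · intro a ha
              have hak : (a:ℕ) < k := by simpa using ha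
              rw [Finset.mem_erase]
              by_cases hai : a = i
              · subst hai
                rw [hτ, Equiv.swap_apply_left]
                constructor
                · intro h
                  exact absurd (congrArg Fin.val h.symm) (by simp [hkk]; omega)
                · simp [hA, hkk]
              · have hakk : a ≠ kk := fun h => by
                  have := congrArg Fin.val h; simp [hkk] at this; omega
                rw [hτ, Equiv.swap_apply_of_ne_of_ne hai hakk]
                exact ⟨hai, by simp [hA]; omega⟩
            · intro a ha
              rw [Finset.mem_erase] at ha
              obtain ⟨hane, haA⟩ := ha
              have hak1 : (a:ℕ) < k + 1 := by simpa [hA] using haA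
              by_cases hak : a = kk
              · subst hak
                rw [hτ, Equiv.swap_apply_right]
                have : (i:ℕ) ≠ k := fun h => hane (Fin.ext h.symm) -- i ≠ a means...
                simp only [Finset.mem_filter, Finset.mem_univ, true_and]
                omega
              · have hane2 : a ≠ i := fun h => by
                  -- a ≠ i? hane : a ≠ i already
                  exact hane h
                rw [hτ, Equiv.swap_apply_of_ne_of_ne hane2 hak]
                have : (a:ℕ) ≠ k := fun h => hak (Fin.ext h)
                simp only [Finset.mem_filter, Finset.mem_univ, true_and]
                omega
            · intro a _; simp [hτ]
            · intro a _; simp [hτ]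
            · intro a ha
              have hak : (a:ℕ) < k := by simpa using ha
              by_cases hai : a = i
              · subst hai
                rw [hτ, Equiv.swap_apply_left, hx', Function.update_self]
              · have hakk : a ≠ kk := fun h => by
                  have := congrArg Fin.val h; simp [hkk] at this; omega
                rw [hτ, Equiv.swap_apply_of_ne_of_ne hai hakk, hx',
                  Function.update_of_ne hai]
          rw [hsum] at hih
          rw [Finset.sum_erase_eq_sub (by exact hiA)] at hih
          calc d (Function.update y i z) = d ((Function.update y i z) ∘ τ) := (hd.symm _ _).symm
            _ = d (fun j : Fin n => if (j:ℕ) < k then x' j else z) := by rw [hcomp]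
            _ ≤ S - g (x i) z := hih
        -- combine
        have hsum2 : ∑ i ∈ A, d (Function.update y i z) ≤ (k:ℝ) * S := by
          calc ∑ i ∈ A, d (Function.update y i z) ≤ ∑ i ∈ A, (S - g (x i) z) :=
                Finset.sum_le_sum hterm
            _ = A.card * S - S := by rw [Finset.sum_sub_distrib, Finset.sum_const,
                  nsmul_eq_mul, ← hS]
            _ = (k:ℝ) * S := by rw [hAcard]; push_cast; ring
        have hkpos : (0:ℝ) < (k:ℝ) := by exact_mod_cast hk1
        have : (k:ℝ) * d y ≤ (k:ℝ) * S := le_trans hstep hsum2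
        have := le_of_mul_le_mul_left this hkpos
        simpa [hy, hS, hA] using this
  refine ⟨main, fun x => ?_⟩
  have h := main n (by omega) le_rfl x
  have h1 : (fun i : Fin n => if (i:ℕ) < n then x i else z) = x := by
    funext i; simp [i.isLt]
  have h2 : (Finset.univ.filter fun i : Fin n => (i:ℕ) < n) = Finset.univ := by
    apply Finset.filter_true_of_mem; intro i _; exact i.isLt
  rwa [h1, h2] at h
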